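/- In the vertical sum lattice L ⊕ᵥ L' (L' stacked on top of L), for any finite subset S, writing S = ({0}×L₀) ∪ ({1}×L₁) with L₀ ⊆ L and L₁ ⊆ L', the closure set satisfies C(S) ⊆ ({0}×C(L₀)) ∪ ({1}×C'(L₁)), where C' is taken with the join of the empty set in the top component interpreted appropriately; consequently |C(S)| ≤ |C(L₀)| + |C'(L₁)|. -/
import Mathlib


/-- The join of a subset of the vertical sum lattice `L ⊕ᵥ L'` determined by
its two components `A ⊆ L` (bottom part) and `B ⊆ L'` (top part): by the join
rules `(0,a) ⊔ (0,b) = (0, a ⊔ b)`, `(1,a) ⊔ (1,b) = (1, a ⊔ b)` and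
`(0,a) ⊔ (1,b) = (1,b)`, it is `inr (⨆ B)` if `B` is nonempty and
`inl (⨆ A)` otherwise. -/
def vsumSup {L L' : Type*} [SemilatticeSup L] [OrderBot L]
    [SemilatticeSup L'] [OrderBot L'] (A : Finset L) (B : Finset L') : L ⊕ L' :=
  if B.Nonempty then Sum.inr (B.sup id) else Sum.inl (A.sup id)

theorem vertical_sum_closure {L L' : Type*} [SemilatticeSup L] [OrderBot L]
    [SemilatticeSup L'] [OrderBot L'] [DecidableEq L] [DecidableEq L']
    (L₀ : Finset L) (L₁ : Finset L') :
    ((L₀.powerset ×ˢ L₁.powerset).image (fun P => vsumSup P.1 P.2)) ⊆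
      ((L₀.powerset.image (fun T => T.sup id)).image Sum.inl ∪
        (L₁.powerset.image (fun T => T.sup id)).image Sum.inr) ∧
    ((L₀.powerset ×ˢ L₁.powerset).image (fun P => vsumSup P.1 P.2)).card ≤
      (L₀.powerset.image (fun T => T.sup id)).card +
        (L₁.powerset.image (fun T => T.sup id)).card := by
  have hsub : ((L₀.powerset ×ˢ L₁.powerset).image (fun P => vsumSup P.1 P.2)) ⊆
      ((L₀.powerset.image (fun T => T.sup id)).image Sum.inl ∪
        (L₁.powerset.image (fun T => T.sup id)).image Sum.inr) := by
    intro x hx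
    simp only [Finset.mem_image, Finset.mem_product, Finset.mem_powerset] at hx
    obtain ⟨⟨A, B⟩, ⟨hA, hB⟩, rfl⟩ := hx
    unfold vsumSup
    by_cases h : B.Nonempty
    · simp only [h, if_true, Finset.mem_union, Finset.mem_image, Finset.mem_powerset]
      right
      exact ⟨B.sup id, ⟨B, hB, rfl⟩, rfl⟩
    · simp only [h, if_false, Finset.mem_union, Finset.mem_image, Finset.mem_powerset]
      left
      exact ⟨A.sup id, ⟨A, hA, rfl⟩, rfl⟩
  refine ⟨hsub, ?_⟩
  calc ((L₀.powerset ×ˢ L₁.powerset).image (fun P => vsumSup P.1 P.2)).card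
      ≤ ((L₀.powerset.image (fun T => T.sup id)).image Sum.inl ∪
        (L₁.powerset.image (fun T => T.sup id)).image Sum.inr).card :=
        Finset.card_le_card hsub
    _ ≤ ((L₀.powerset.image (fun T => T.sup id)).image Sum.inl).card +
        ((L₁.powerset.image (fun T => T.sup id)).image Sum.inr).card :=
        Finset.card_union_le _ _
    _ ≤ _ := by
        gcongr <;> exact Finset.card_image_le
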